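/- If the chronological products satisfy the causality axiom, then the antichronological products factorize in the reversed order: T̄(S₁ ∪ S₂) = T̄(S₂)·T̄(S₁) for all disjoint S₁, S₂ ⊆ I with x(S₁) ≥ x(S₂) (i.e. x_i − x_j ∉ V̄⁻ for all i ∈ S₁, j ∈ S₂). -/

import Mathlib

/-- The Minkowski quadratic form on `ℝ⁴`. -/
def minkQ (x : Fin 4 → ℝ) : ℝ := x 0 ^ 2 - x 1 ^ 2 - x 2 ^ 2 - x 3 ^ 2

/-- The open backward light cone `V⁻`. -/
def Vminus : Set (Fin 4 → ℝ) := {x | 0 < minkQ x ∧ x 0 < 0}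

/-- Sum over all ordered partitions of `X` into `r ≥ 1` nonempty pairwise disjoint blocks
`X₁, …, X_r` of `(-1)^r * T X₁ * ⋯ * T X_r` (with value `1` for `X = ∅`), computed by peeling
off the first block. -/
def opSum {A : Type*} [Ring A] {ι : Type*} [DecidableEq ι]
    (T : Finset ι → A) (X : Finset ι) : A :=
  if _hX : X = ∅ then 1
  else
    ∑ Y ∈ (X.powerset.filter (fun Y => Y ≠ ∅)).attach,
      (-1 : A) * T Y.1 * opSum T (X \ Y.1)
termination_by X.card
decreasing_by
  have hY := Y.2
  simp only [Finset.mem_filter, Finset.mem_powerset] at hY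
  have h1 : Y.1.card ≤ X.card := Finset.card_le_card hY.1
  have h2 : 0 < Y.1.card := Finset.card_pos.mpr (Finset.nonempty_iff_ne_empty.mpr hY.2)
  rw [Finset.card_sdiff, Finset.inter_eq_left.mpr hY.1]
  omega

/-- The antichronological products `T̄`, defined by `T̄(∅) = 1` and
`(−1)^{|X|} T̄(X) = Σ_{r=1}^{|X|} (−1)^r Σ T(X₁)⋯T(X_r)`, the inner sum running over all ordered
partitions of `X` into `r` nonempty pairwise disjoint subsets. -/
def chronoBar {A : Type*} [Ring A] {ι : Type*} [DecidableEq ι]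
    (T : Finset ι → A) (X : Finset ι) : A :=
  (-1 : A) ^ X.card * opSum T X

namespace Anti

variable {A : Type*} [Ring A] {ι : Type*} [DecidableEq ι]

/-- Analogue of `opSum`, peeling off the **last** block. -/
def opSum' (T : Finset ι → A) (X : Finset ι) : A :=
  if _hX : X = ∅ then 1
  else
    ∑ Y ∈ (X.powerset.filter (fun Y => Y ≠ ∅)).attach,
      (-1 : A) * opSum' T (X \ Y.1) * T Y.1
termination_by X.card
decreasing_by
  have hY := Y.2
  simp only [Finset.mem_filter, Finset.mem_powerset] at hY
  have h1 : Y.1.card ≤ X.card := Finset.card_le_card hY.1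
  have h2 : 0 < Y.1.card := Finset.card_pos.mpr (Finset.nonempty_iff_ne_empty.mpr hY.2)
  rw [Finset.card_sdiff, Finset.inter_eq_left.mpr hY.1]
  omega

/-- Convolution on the incidence algebra of finsets. -/
def conv (f g : Finset ι → A) (X : Finset ι) : A :=
  ∑ Y ∈ X.powerset, f Y * g (X \ Y)

/-- The convolution unit. -/
def delta (X : Finset ι) : A := if X = ∅ then 1 else 0

theorem opSum_empty (T : Finset ι → A) : opSum T ∅ = 1 := by
  rw [opSum]; simp

theorem opSum'_empty (T : Finset ι → A) : opSum' T ∅ = 1 := by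
  rw [opSum']; simp

theorem opSum_ne (T : Finset ι → A) {X : Finset ι} (hX : X ≠ ∅) :
    opSum T X = ∑ Y ∈ X.powerset.filter (fun Y => Y ≠ ∅), (-1 : A) * T Y * opSum T (X \ Y) := by
  rw [opSum, dif_neg hX]
  exact Finset.sum_attach (X.powerset.filter (fun Y => Y ≠ ∅)) (fun Y => (-1 : A) * T Y * opSum T (X \ Y))

theorem opSum'_ne (T : Finset ι → A) {X : Finset ι} (hX : X ≠ ∅) :
    opSum' T X
      = ∑ Y ∈ X.powerset.filter (fun Y => Y ≠ ∅), (-1 : A) * opSum' T (X \ Y) * T Y := by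
  rw [opSum', dif_neg hX]
  exact Finset.sum_attach (X.powerset.filter (fun Y => Y ≠ ∅)) (fun Y => (-1 : A) * opSum' T (X \ Y) * T Y)

theorem powerset_split (X : Finset ι) (f : Finset ι → A) :
    ∑ Y ∈ X.powerset, f Y = f ∅ + ∑ Y ∈ X.powerset.filter (fun Y => Y ≠ ∅), f Y := by
  rw [← Finset.sum_filter_add_sum_filter_not X.powerset (fun Y => Y = ∅)]
  congr 1
  have : X.powerset.filter (fun Y => Y = ∅) = {∅} := by
    ext Y
    simp only [Finset.mem_filter, Finset.mem_powerset, Finset.mem_singleton]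
    exact ⟨fun h => h.2, fun h => ⟨h ▸ Finset.empty_subset X, h⟩⟩
  rw [this, Finset.sum_singleton]

/-- `T ⋆ opSum T = δ`. -/
theorem conv_T_opSum (T : Finset ι → A) (hT1 : T ∅ = 1) (X : Finset ι) :
    conv T (opSum T) X = delta X := by
  by_cases hX : X = ∅
  · subst hX; simp [conv, delta, opSum_empty, hT1]
  · rw [conv, delta, if_neg hX, powerset_split]
    rw [Finset.sdiff_empty, hT1, one_mul]
    have := opSum_ne T hX
    have h2 : ∑ Y ∈ X.powerset.filter (fun Y => Y ≠ ∅), T Y * opSum T (X \ Y)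
        = - opSum T X := by
      rw [this, ← Finset.sum_neg_distrib]
      exact Finset.sum_congr rfl fun Y _ => by simp
    rw [h2]; simp

/-- `opSum' T ⋆ T = δ`. -/
theorem conv_opSum'_T (T : Finset ι → A) (hT1 : T ∅ = 1) (X : Finset ι) :
    conv (opSum' T) T X = delta X := by
  by_cases hX : X = ∅
  · subst hX; simp [conv, delta, opSum'_empty, hT1]
  · rw [conv, delta, if_neg hX]
    -- reindex `Y ↦ X \ Y`
    have hre : ∑ Y ∈ X.powerset, opSum' T Y * T (X \ Y)
        = ∑ Y ∈ X.powerset, opSum' T (X \ Y) * T Y := by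
      refine Finset.sum_nbij' (fun Y => X \ Y) (fun Y => X \ Y) ?_ ?_ ?_ ?_ ?_
      · intro Y hY; simp
      · intro Y hY; simp
      · intro Y hY
        simp only [Finset.mem_powerset] at hY
        exact Finset.sdiff_sdiff_eq_self hY
      · intro Y hY
        simp only [Finset.mem_powerset] at hY
        exact Finset.sdiff_sdiff_eq_self hY
      · intro Y hY
        simp only [Finset.mem_powerset] at hY
        rw [Finset.sdiff_sdiff_eq_self hY]
    rw [hre, powerset_split]
    rw [hT1, mul_one, Finset.sdiff_empty]
    have h2 : ∑ Y ∈ X.powerset.filter (fun Y => Y ≠ ∅), opSum' T (X \ Y) * T Y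
        = - opSum' T X := by
      rw [opSum'_ne T hX, ← Finset.sum_neg_distrib]
      exact Finset.sum_congr rfl fun Y _ => by simp
    rw [h2]; simp

/-- A right convolution inverse of `T` (on subsets of `N`) agrees with any global left
inverse on subsets of `N`. -/
theorem inv_unique (T U V : Finset ι → A) (N : Finset ι)
    (hTU : ∀ X ⊆ N, conv T U X = delta X)
    (hVT : ∀ X : Finset ι, conv V T X = delta X) :
    ∀ X ⊆ N, U X = V X := by
  intro X hXN
  have hU : U X = ∑ Y ∈ X.powerset, delta Y * U (X \ Y) := by
    rw [Finset.sum_eq_single ∅]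
    · simp [delta]
    · intro Y _ hY; simp [delta, hY]
    · intro h; exact absurd (Finset.empty_mem_powerset X) h
  have hV : V X = ∑ Z ∈ X.powerset, V Z * delta (X \ Z) := by
    rw [Finset.sum_eq_single X]
    · simp [delta]
    · intro Z hZ hne
      simp only [Finset.mem_powerset] at hZ
      have : X \ Z ≠ ∅ := fun h =>
        hne (Finset.Subset.antisymm hZ (Finset.sdiff_eq_empty_iff_subset.mp h))
      simp [delta, this]
    · intro h; exact absurd (Finset.mem_powerset_self X) h
  have key : ∑ Y ∈ X.powerset, conv V T Y * U (X \ Y)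
      = ∑ Z ∈ X.powerset, V Z * conv T U (X \ Z) := by
    simp only [conv, Finset.sum_mul, Finset.mul_sum]
    rw [Finset.sum_sigma', Finset.sum_sigma']
    refine Finset.sum_bij' (fun p _ => ⟨p.2, p.1 \ p.2⟩) (fun p _ => ⟨p.1 ∪ p.2, p.1⟩)
      ?_ ?_ ?_ ?_ ?_
    · intro p hp
      simp only [Finset.mem_sigma, Finset.mem_powerset] at hp ⊢
      exact ⟨hp.2.trans hp.1, Finset.sdiff_subset_sdiff hp.1 le_rfl⟩
    · intro p hp
      simp only [Finset.mem_sigma, Finset.mem_powerset] at hp ⊢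
      exact ⟨Finset.union_subset hp.1 (hp.2.trans Finset.sdiff_subset), Finset.subset_union_left⟩
    · intro p hp
      simp only [Finset.mem_sigma, Finset.mem_powerset] at hp
      obtain ⟨Y, Z⟩ := p
      exact Sigma.ext (Finset.union_sdiff_of_subset hp.2) (heq_of_eq rfl)
    · intro p hp
      simp only [Finset.mem_sigma, Finset.mem_powerset] at hp
      obtain ⟨Z, W⟩ := p
      have h1 : (Z ∪ W) \ Z = W := by
        rw [Finset.union_sdiff_cancel_left]
        exact Finset.disjoint_of_subset_right hp.2 Finset.sdiff_disjoint.symm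
      exact Sigma.ext rfl (heq_of_eq h1)
    · intro p hp
      simp only [Finset.mem_sigma, Finset.mem_powerset] at hp
      have h1 : (X \ p.2) \ (p.1 \ p.2) = X \ p.1 := by
        ext a
        simp only [Finset.mem_sdiff]
        constructor
        · rintro ⟨⟨haX, haZ⟩, h⟩
          exact ⟨haX, fun haY => h ⟨haY, haZ⟩⟩
        · rintro ⟨haX, haY⟩
          exact ⟨⟨haX, fun haZ => haY (hp.2 haZ)⟩, fun h => haY h.1⟩
      rw [h1, mul_assoc]
  have hU2 : U X = ∑ Y ∈ X.powerset, conv V T Y * U (X \ Y) := by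
    rw [hU]
    exact Finset.sum_congr rfl fun Y _ => by rw [hVT Y]
  have hV2 : V X = ∑ Z ∈ X.powerset, V Z * conv T U (X \ Z) := by
    rw [hV]
    refine Finset.sum_congr rfl fun Z hZ => ?_
    rw [hTU _ (le_trans Finset.sdiff_subset hXN)]
  rw [hU2, hV2, key]

theorem opSum_eq_opSum' (T : Finset ι → A) (hT1 : T ∅ = 1) : opSum T = opSum' T :=
  funext fun X =>
    inv_unique T (opSum T) (opSum' T) X (fun Y _ => conv_T_opSum T hT1 Y)
      (conv_opSum'_T T hT1) X subset_rfl

theorem conv_opSum_T (T : Finset ι → A) (hT1 : T ∅ = 1) (X : Finset ι) :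
    conv (opSum T) T X = delta X := by
  rw [opSum_eq_opSum' T hT1]
  exact conv_opSum'_T T hT1 X

theorem neg_one_pow_mul_comm (n : ℕ) (a : A) : a * (-1 : A) ^ n = (-1 : A) ^ n * a :=
  ((Commute.neg_one_left a).pow_left n).eq.symm

/-- The key causal computation: `T ⋆ (opSum(·∩S₂)·opSum(·∩S₁)) = δ` below `S₁ ∪ S₂`. -/
theorem causal_conv (x : ι → Fin 4 → ℝ) (T : Finset ι → A) (hT1 : T ∅ = 1)
    (hcaus : ∀ S₁ S₂ : Finset ι, Disjoint S₁ S₂ →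
      (∀ i ∈ S₁, ∀ j ∈ S₂, x i - x j ∉ closure Vminus) → T (S₁ ∪ S₂) = T S₁ * T S₂)
    (S₁ S₂ : Finset ι) (hd : Disjoint S₁ S₂)
    (hx : ∀ i ∈ S₁, ∀ j ∈ S₂, x i - x j ∉ closure Vminus) :
    ∀ X ⊆ S₁ ∪ S₂,
      conv T (fun Z => opSum T (Z ∩ S₂) * opSum T (Z ∩ S₁)) X = delta X := by
  intro X hX
  have hbij : conv T (fun Z => opSum T (Z ∩ S₂) * opSum T (Z ∩ S₁)) X
      = ∑ p ∈ (X ∩ S₁).powerset ×ˢ (X ∩ S₂).powerset,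
          T p.1 * (T p.2 * opSum T ((X ∩ S₂) \ p.2)) * opSum T ((X ∩ S₁) \ p.1) := by
    rw [conv]
    refine Finset.sum_nbij' (fun Y => (Y ∩ S₁, Y ∩ S₂)) (fun p => p.1 ∪ p.2) ?_ ?_ ?_ ?_ ?_
    · intro Y hY
      simp only [Finset.mem_powerset] at hY
      simp only [Finset.mem_product, Finset.mem_powerset]
      exact ⟨Finset.inter_subset_inter hY le_rfl, Finset.inter_subset_inter hY le_rfl⟩
    · intro p hp
      simp only [Finset.mem_product, Finset.mem_powerset] at hp
      simp only [Finset.mem_powerset]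
      exact Finset.union_subset (hp.1.trans Finset.inter_subset_left)
        (hp.2.trans Finset.inter_subset_left)
    · intro Y hY
      simp only [Finset.mem_powerset] at hY
      have : Y ∩ S₁ ∪ Y ∩ S₂ = Y := by
        rw [← Finset.inter_union_distrib_left]
        exact Finset.inter_eq_left.mpr (hY.trans hX)
      simp [this]
    · intro p hp
      simp only [Finset.mem_product, Finset.mem_powerset] at hp
      have h1 : p.1 ⊆ S₁ := hp.1.trans Finset.inter_subset_right
      have h2 : p.2 ⊆ S₂ := hp.2.trans Finset.inter_subset_right
      have e1 : (p.1 ∪ p.2) ∩ S₁ = p.1 := by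
        rw [Finset.union_inter_distrib_right, Finset.inter_eq_left.mpr h1,
          Finset.disjoint_iff_inter_eq_empty.mp (hd.symm.mono_left h2), Finset.union_empty]
      have e2 : (p.1 ∪ p.2) ∩ S₂ = p.2 := by
        rw [Finset.union_inter_distrib_right, Finset.inter_eq_left.mpr h2,
          Finset.disjoint_iff_inter_eq_empty.mp (hd.mono_left h1), Finset.empty_union]
      simp [e1, e2]
    · intro Y hY
      simp only [Finset.mem_powerset] at hY
      have h1 : Y ∩ S₁ ⊆ S₁ := Finset.inter_subset_right
      have h2 : Y ∩ S₂ ⊆ S₂ := Finset.inter_subset_right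
      have hYu : Y ∩ S₁ ∪ Y ∩ S₂ = Y := by
        rw [← Finset.inter_union_distrib_left]
        exact Finset.inter_eq_left.mpr (hY.trans hX)
      have hTY : T Y = T (Y ∩ S₁) * T (Y ∩ S₂) := by
        have := hcaus (Y ∩ S₁) (Y ∩ S₂) (hd.mono h1 h2)
          (fun i hi j hj => hx i (h1 hi) j (h2 hj))
        rwa [hYu] at this
      have e2 : (X \ Y) ∩ S₂ = (X ∩ S₂) \ (Y ∩ S₂) := by
        ext a
        simp only [Finset.mem_sdiff, Finset.mem_inter]
        tauto
      have e1 : (X \ Y) ∩ S₁ = (X ∩ S₁) \ (Y ∩ S₁) := by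
        ext a
        simp only [Finset.mem_sdiff, Finset.mem_inter]
        tauto
      simp only [e1, e2, hTY]
      rw [mul_assoc, mul_assoc, mul_assoc]
  rw [hbij, Finset.sum_product]
  have hinner : ∀ Y₁ ∈ (X ∩ S₁).powerset,
      ∑ Y₂ ∈ (X ∩ S₂).powerset,
          T Y₁ * (T Y₂ * opSum T ((X ∩ S₂) \ Y₂)) * opSum T ((X ∩ S₁) \ Y₁)
        = T Y₁ * delta (X ∩ S₂) * opSum T ((X ∩ S₁) \ Y₁) := by
    intro Y₁ _
    rw [← Finset.sum_mul, ← Finset.mul_sum, ← conv, conv_T_opSum T hT1]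
  rw [Finset.sum_congr rfl hinner]
  by_cases h2 : X ∩ S₂ = ∅
  · have hXS1 : X ∩ S₁ = X := by
      apply Finset.inter_eq_left.mpr
      intro a ha
      rcases Finset.mem_union.mp (hX ha) with h | h
      · exact h
      · exact absurd (Finset.mem_inter.mpr ⟨ha, h⟩) (by simp [h2])
    have : ∀ Y₁ ∈ (X ∩ S₁).powerset,
        T Y₁ * delta (X ∩ S₂) * opSum T ((X ∩ S₁) \ Y₁)
          = T Y₁ * opSum T ((X ∩ S₁) \ Y₁) := by
      intro Y₁ _
      rw [h2]
      simp [delta]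
    rw [Finset.sum_congr rfl this, ← conv, conv_T_opSum T hT1, hXS1]
  · have hXne : X ≠ ∅ := by
      intro h
      exact h2 (by simp [h])
    have : ∀ Y₁ ∈ (X ∩ S₁).powerset,
        T Y₁ * delta (X ∩ S₂) * opSum T ((X ∩ S₁) \ Y₁) = 0 := by
      intro Y₁ _
      simp [delta, h2]
    rw [Finset.sum_congr rfl this, Finset.sum_const_zero, delta, if_neg hXne]

end Anti

/-- If the chronological products satisfy the causality axiom, then the antichronological
products factorize in the reversed order: `T̄(S₁ ∪ S₂) = T̄(S₂)·T̄(S₁)` whenever `S₁, S₂` are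
disjoint and `x(S₁) ≥ x(S₂)`. -/
theorem antichrono_reverse_causality {A : Type*} [Ring A] {ι : Type*} [Fintype ι] [DecidableEq ι]
    (x : ι → Fin 4 → ℝ) (T : Finset ι → A) (hT1 : T ∅ = 1)
    (hcaus : ∀ S₁ S₂ : Finset ι, Disjoint S₁ S₂ →
      (∀ i ∈ S₁, ∀ j ∈ S₂, x i - x j ∉ closure Vminus) → T (S₁ ∪ S₂) = T S₁ * T S₂)
    (S₁ S₂ : Finset ι) (hd : Disjoint S₁ S₂)
    (hx : ∀ i ∈ S₁, ∀ j ∈ S₂, x i - x j ∉ closure Vminus) :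
    chronoBar T (S₁ ∪ S₂) = chronoBar T S₂ * chronoBar T S₁ := by
  have hU := Anti.inv_unique T (fun Z => opSum T (Z ∩ S₂) * opSum T (Z ∩ S₁)) (opSum T)
    (S₁ ∪ S₂) (Anti.causal_conv x T hT1 hcaus S₁ S₂ hd hx) (Anti.conv_opSum_T T hT1)
    (S₁ ∪ S₂) subset_rfl
  simp only [Finset.union_inter_cancel_right, Finset.union_inter_cancel_left] at hU
  unfold chronoBar
  rw [← hU, Finset.card_union_of_disjoint hd, pow_add]
  calc ((-1 : A) ^ S₁.card * (-1 : A) ^ S₂.card) * (opSum T S₂ * opSum T S₁)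
      = ((-1 : A) ^ S₂.card * (-1 : A) ^ S₁.card) * (opSum T S₂ * opSum T S₁) := by
        rw [← pow_add, ← pow_add, add_comm]
    _ = (-1 : A) ^ S₂.card * (((-1 : A) ^ S₁.card * opSum T S₂) * opSum T S₁) := by
        rw [mul_assoc, mul_assoc]
    _ = (-1 : A) ^ S₂.card * ((opSum T S₂ * (-1 : A) ^ S₁.card) * opSum T S₁) := by
        rw [Anti.neg_one_pow_mul_comm]
    _ = (-1 : A) ^ S₂.card * opSum T S₂ * ((-1 : A) ^ S₁.card * opSum T S₁) := by
        rw [mul_assoc, mul_assoc]
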